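/- For all n ≥ 2, the number of permutations π ∈ Av_n(123,132,321) with π(n) = 1 equals (n−2)!!, and the number of permutations π ∈ Av_n(123,132,321) with π(n−1) = 1 equals (n−1)!!. -/

import Mathlib

/-- `ConsecOcc p π i`: the word `π(i) π(i+1) … π(i+r-1)` (positions `0`-indexed)
is order-isomorphic to the pattern word `p 0, …, p (r-1)`. -/
def ConsecOcc {n r : ℕ} (p : Fin r → ℕ) (π : Equiv.Perm (Fin n)) (i : ℕ) : Prop :=
  ∃ h : i + r ≤ n, ∀ j k : Fin r,
    (π ⟨i + j.val, by have := j.isLt; omega⟩ < π ⟨i + k.val, by have := k.isLt; omega⟩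
      ↔ p j < p k)

/-- The number of consecutive occurrences of the pattern `p` in `π`. -/
noncomputable def occCount {n r : ℕ} (p : Fin r → ℕ) (π : Equiv.Perm (Fin n)) : ℕ :=
  Nat.card {i : ℕ // ConsecOcc p π i}

/-- `π` has no consecutive occurrence of any pattern in `ps`. -/
def AvoidsAll {n r : ℕ} (ps : List (Fin r → ℕ)) (π : Equiv.Perm (Fin n)) : Prop :=
  ∀ p ∈ ps, ∀ i, ¬ ConsecOcc p π i

-- Total number of consecutive occurrences of `p` over all size-`n` permutations satisfying `P`.
open scoped Classical in
noncomputable def totOcc {n r : ℕ} (p : Fin r → ℕ) (P : Equiv.Perm (Fin n) → Prop) : ℕ :=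
  ∑ π : Equiv.Perm (Fin n), if P π then occCount p π else 0

/-- The number of size-`n` permutations satisfying `P`. -/
noncomputable def classCard (n : ℕ) (P : Equiv.Perm (Fin n) → Prop) : ℕ :=
  Nat.card {π : Equiv.Perm (Fin n) // P π}

def p123 : Fin 3 → ℕ := ![1,2,3]
def p132 : Fin 3 → ℕ := ![1,3,2]
def p213 : Fin 3 → ℕ := ![2,1,3]
def p231 : Fin 3 → ℕ := ![2,3,1]
def p312 : Fin 3 → ℕ := ![3,1,2]
def p321 : Fin 3 → ℕ := ![3,2,1]


def Bad (x y z : ℕ) : Prop := (x < y ∧ x < z) ∨ (y < x ∧ z < y)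

lemma char123 (v : Fin 3 → ℕ) :
    (∀ j k : Fin 3, (v j < v k ↔ p123 j < p123 k)) ↔ (v 0 < v 1 ∧ v 1 < v 2) := by
  constructor
  · intro H; exact ⟨(H 0 1).2 (by norm_num [p123]), (H 1 2).2 (by decide)⟩
  · rintro ⟨h1, h2⟩ j k
    fin_cases j <;> fin_cases k <;> simp [p123] <;> omega

lemma char132 (v : Fin 3 → ℕ) :
    (∀ j k : Fin 3, (v j < v k ↔ p132 j < p132 k)) ↔ (v 0 < v 2 ∧ v 2 < v 1) := by
  constructor
  · intro H; exact ⟨(H 0 2).2 (by decide), (H 2 1).2 (by decide)⟩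
  · rintro ⟨h1, h2⟩ j k
    fin_cases j <;> fin_cases k <;> simp [p132] <;> omega

lemma char321 (v : Fin 3 → ℕ) :
    (∀ j k : Fin 3, (v j < v k ↔ p321 j < p321 k)) ↔ (v 2 < v 1 ∧ v 1 < v 0) := by
  constructor
  · intro H; exact ⟨(H 2 1).2 (by decide), (H 1 0).2 (by norm_num [p321])⟩
  · rintro ⟨h1, h2⟩ j k
    fin_cases j <;> fin_cases k <;> simp [p321] <;> omega

lemma consec_iff3 {n : ℕ} (p : Fin 3 → ℕ) (π : Equiv.Perm (Fin n)) (i : ℕ) (h : i + 3 ≤ n) :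
    ConsecOcc p π i ↔ ∀ j k : Fin 3,
      ((π ⟨i + j.1, by omega⟩).val < (π ⟨i + k.1, by omega⟩).val ↔ p j < p k) := by
  constructor
  · rintro ⟨h', H⟩ j k
    have := H j k
    rwa [Fin.lt_def] at this
  · intro H
    exact ⟨h, fun j k => by rw [Fin.lt_def]; exact H j k⟩

lemma occ123_iff {n : ℕ} (π : Equiv.Perm (Fin n)) (i : ℕ) (h : i + 3 ≤ n) :
    ConsecOcc p123 π i ↔
      ((π ⟨i, by omega⟩).val < (π ⟨i+1, by omega⟩).val ∧
       (π ⟨i+1, by omega⟩).val < (π ⟨i+2, by omega⟩).val) := by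
  rw [consec_iff3 _ _ _ h]
  exact char123 (fun t : Fin 3 => (π ⟨i + t.1, by have := t.isLt; omega⟩).val)

lemma occ132_iff {n : ℕ} (π : Equiv.Perm (Fin n)) (i : ℕ) (h : i + 3 ≤ n) :
    ConsecOcc p132 π i ↔
      ((π ⟨i, by omega⟩).val < (π ⟨i+2, by omega⟩).val ∧
       (π ⟨i+2, by omega⟩).val < (π ⟨i+1, by omega⟩).val) := by
  rw [consec_iff3 _ _ _ h]
  exact char132 (fun t : Fin 3 => (π ⟨i + t.1, by have := t.isLt; omega⟩).val)

lemma occ321_iff {n : ℕ} (π : Equiv.Perm (Fin n)) (i : ℕ) (h : i + 3 ≤ n) :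
    ConsecOcc p321 π i ↔
      ((π ⟨i+2, by omega⟩).val < (π ⟨i+1, by omega⟩).val ∧
       (π ⟨i+1, by omega⟩).val < (π ⟨i, by omega⟩).val) := by
  rw [consec_iff3 _ _ _ h]
  exact char321 (fun t : Fin 3 => (π ⟨i + t.1, by have := t.isLt; omega⟩).val)

lemma avoid_iff {n : ℕ} (π : Equiv.Perm (Fin n)) :
    AvoidsAll [p123, p132, p321] π ↔
      ∀ i, ∀ h : i + 3 ≤ n, ¬ Bad (π ⟨i, by omega⟩).val (π ⟨i+1, by omega⟩).val
        (π ⟨i+2, by omega⟩).val := by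
  constructor
  · intro H i h hbad
    have h123 := H p123 (by simp) i
    have h132 := H p132 (by simp) i
    have h321 := H p321 (by simp) i
    rw [occ123_iff _ _ h] at h123
    rw [occ132_iff _ _ h] at h132
    rw [occ321_iff _ _ h] at h321
    have hyz : (π ⟨i+1, by omega⟩).val ≠ (π ⟨i+2, by omega⟩).val := by
      intro he
      have : (⟨i+1, by omega⟩ : Fin n) = ⟨i+2, by omega⟩ := π.injective (Fin.ext he)
      simp [Fin.mk.injEq] at this
    rcases hbad with ⟨h1, h2⟩ | ⟨h1, h2⟩
    · omega
    · omega
  · intro H p hp i hocc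
    have h : i + 3 ≤ n := hocc.1
    have hB := H i h
    fin_cases hp
    · rw [occ123_iff _ _ h] at hocc
      exact hB (Or.inl ⟨hocc.1, by omega⟩)
    · rw [occ132_iff _ _ h] at hocc
      exact hB (Or.inl ⟨by omega, by omega⟩)
    · rw [occ321_iff _ _ h] at hocc
      exact hB (Or.inr ⟨by omega, by omega⟩)

lemma perm_val_ne {n : ℕ} (π : Equiv.Perm (Fin n)) {a b : ℕ} (ha : a < n) (hb : b < n)
    (hab : a ≠ b) : (π ⟨a, ha⟩).val ≠ (π ⟨b, hb⟩).val := by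
  intro he
  have := π.injective (Fin.ext he)
  rw [Fin.mk.injEq] at this
  exact hab this

section C1
variable {m : ℕ}

/-- values of `π` at positions `< m` are positive when `π m = 0`. -/
lemma pos_of_trailing_zero (π : Equiv.Perm (Fin (m+1)))
    (hπ : π ⟨m, by omega⟩ = ⟨0, by omega⟩) {i : ℕ} (hi : i < m) :
    1 ≤ (π ⟨i, by omega⟩).val := by
  have h0 : (π ⟨m, by omega⟩).val = 0 := by rw [hπ]
  have := perm_val_ne π (show i < m+1 by omega) (show m < m+1 by omega) (by omega)
  omega

lemma shrink1_lt (π : Equiv.Perm (Fin (m+1)))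
    (hπ : π ⟨m, by omega⟩ = ⟨0, by omega⟩) (i : Fin m) :
    (π ⟨i.1, by omega⟩).val - 1 < m := by
  have h1 := pos_of_trailing_zero π hπ i.isLt
  have h2 := (π ⟨i.1, by omega⟩).isLt
  omega

/-- Remove a trailing 0 from a permutation (and shift values down by 1). -/
noncomputable def shrink1 (π : Equiv.Perm (Fin (m+1)))
    (hπ : π ⟨m, by omega⟩ = ⟨0, by omega⟩) : Equiv.Perm (Fin m) :=
  Equiv.ofBijective
    (fun i => ⟨(π ⟨i.1, by omega⟩).val - 1, shrink1_lt π hπ i⟩)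
    (by
      rw [← Finite.injective_iff_bijective]
      intro a b hab
      rw [Fin.mk.injEq] at hab
      have ha := pos_of_trailing_zero π hπ a.isLt
      have hb := pos_of_trailing_zero π hπ b.isLt
      have : (π ⟨a.1, by omega⟩).val = (π ⟨b.1, by omega⟩).val := by omega
      have := π.injective (Fin.ext this)
      rw [Fin.mk.injEq] at this
      exact Fin.ext this)

lemma shrink1_apply (π : Equiv.Perm (Fin (m+1)))
    (hπ : π ⟨m, by omega⟩ = ⟨0, by omega⟩) (i : Fin m) :
    ((shrink1 π hπ) i).val = (π ⟨i.1, by omega⟩).val - 1 := rfl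

/-- Append a 0 to a permutation (shifting old values up by 1). -/
noncomputable def grow1 (σ : Equiv.Perm (Fin m)) : Equiv.Perm (Fin (m+1)) :=
  Equiv.ofBijective
    (fun i => if h : i.1 < m then ⟨(σ ⟨i.1, h⟩).val + 1, by have := (σ ⟨i.1, h⟩).isLt; omega⟩
      else ⟨0, by omega⟩)
    (by
      rw [← Finite.injective_iff_bijective]
      intro a b hab
      by_cases ha : a.1 < m <;> by_cases hb : b.1 < m <;>
        simp only [ha, hb, dif_pos, dif_neg, not_false_iff, Fin.mk.injEq] at hab
      · have : (σ ⟨a.1, ha⟩).val = (σ ⟨b.1, hb⟩).val := by omega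
        have := σ.injective (Fin.ext this)
        rw [Fin.mk.injEq] at this
        exact Fin.ext this
      · omega
      · omega
      · apply Fin.ext; have := a.isLt; have := b.isLt; omega)

lemma grow1_apply_lt (σ : Equiv.Perm (Fin m)) {i : ℕ} (hi : i < m+1)
    (h : i < m) : ((grow1 σ) ⟨i, hi⟩).val = (σ ⟨i, h⟩).val + 1 := by
  show (if h' : i < m then _ else _ : Fin (m+1)).val = _
  rw [dif_pos h]

lemma grow1_apply_last (σ : Equiv.Perm (Fin m)) :
    (grow1 σ) ⟨m, by omega⟩ = ⟨0, by omega⟩ := by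
  show (if h' : m < m then _ else _ : Fin (m+1)) = _
  rw [dif_neg (by omega)]

attribute [irreducible] shrink1 grow1

lemma grow1_shrink1 (π : Equiv.Perm (Fin (m+1)))
    (hπ : π ⟨m, by omega⟩ = ⟨0, by omega⟩) : grow1 (shrink1 π hπ) = π := by
  apply Equiv.ext
  intro i
  apply Fin.ext
  by_cases h : i.1 < m
  · have e : i = ⟨i.1, by omega⟩ := Fin.ext rfl
    rw [e, grow1_apply_lt _ _ h]
    rw [shrink1_apply π hπ ⟨i.1, h⟩]
    have := pos_of_trailing_zero π hπ h
    simp only [Fin.val_mk] at this ⊢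
    omega
  · have e : i = ⟨m, by omega⟩ := Fin.ext (by simp only [Fin.val_mk]; have := i.isLt; omega)
    rw [e, grow1_apply_last, hπ]

lemma shrink1_grow1 (σ : Equiv.Perm (Fin m)) :
    shrink1 (grow1 σ) (grow1_apply_last σ) = σ := by
  apply Equiv.ext
  intro i
  apply Fin.ext
  rw [shrink1_apply]
  rw [grow1_apply_lt σ (by omega) i.isLt]
  simp
end C1

section T1
variable {m : ℕ}

lemma val_one_at (hm : 2 ≤ m) (π : Equiv.Perm (Fin (m+1)))
    (hav : AvoidsAll [p123, p132, p321] π)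
    (hπ : π ⟨m, by omega⟩ = ⟨0, by omega⟩) :
    π ⟨m-2, by omega⟩ = ⟨1, by omega⟩ := by
  rw [avoid_iff] at hav
  set j := π.symm ⟨1, by omega⟩ with hj
  have hj1 : π j = ⟨1, by omega⟩ := π.apply_symm_apply _
  have hj1v : (π ⟨j.1, j.isLt⟩).val = 1 := by rw [Fin.eta, hj1]
  have h0v : (π ⟨m, by omega⟩).val = 0 := by rw [hπ]
  have hjn : j.1 ≠ m := by
    intro h
    have e : (⟨j.1, j.isLt⟩ : Fin (m+1)) = ⟨m, by omega⟩ := Fin.ext (by simpa using h)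
    rw [e, hπ] at hj1v
    simp at hj1v
  rcases Nat.lt_or_ge (j.1 + 3) (m+1) with hA | hB
  · exfalso
    have hb := hav j.1 (by omega)
    have hx : (π ⟨j.1, by omega⟩).val = 1 := hj1v
    have hy0 : (π ⟨j.1+1, by omega⟩).val ≠ (π ⟨m, by omega⟩).val :=
      perm_val_ne π (show j.1+1 < m+1 by omega) (show m < m+1 by omega) (by omega)
    have hy1 : (π ⟨j.1+1, by omega⟩).val ≠ (π ⟨j.1, j.isLt⟩).val :=
      perm_val_ne π (show j.1+1 < m+1 by omega) j.isLt (by omega)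
    have hz0 : (π ⟨j.1+2, by omega⟩).val ≠ (π ⟨m, by omega⟩).val :=
      perm_val_ne π (show j.1+2 < m+1 by omega) (show m < m+1 by omega) (by omega)
    have hz1 : (π ⟨j.1+2, by omega⟩).val ≠ (π ⟨j.1, j.isLt⟩).val :=
      perm_val_ne π (show j.1+2 < m+1 by omega) j.isLt (by omega)
    unfold Bad at hb
    omega
  · have hcase : j.1 = m-2 ∨ j.1 = m-1 := by have := j.isLt; omega
    rcases hcase with h | h
    · have e : (⟨m-2, by omega⟩ : Fin (m+1)) = ⟨j.1, j.isLt⟩ :=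
        Fin.ext (by simpa using h.symm)
      rw [e, Fin.eta, hj1]
    · exfalso
      have hb := hav (m-2) (by omega)
      have hy : (π ⟨m-2+1, by omega⟩).val = 1 := by
        have e : (⟨m-2+1, by omega⟩ : Fin (m+1)) = ⟨j.1, j.isLt⟩ := Fin.ext (by simp; omega)
        rw [e, Fin.eta, hj1]
      have hz : (π ⟨m-2+2, by omega⟩).val = 0 := by
        have e : (⟨m-2+2, by omega⟩ : Fin (m+1)) = ⟨m, by omega⟩ := Fin.ext (by simp; omega)
        rw [e, hπ]
      have hx0 : (π ⟨m-2, by omega⟩).val ≠ (π ⟨m, by omega⟩).val :=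
        perm_val_ne π (show m-2 < m+1 by omega) (show m < m+1 by omega) (by omega)
      have hx1 : (π ⟨m-2, by omega⟩).val ≠ (π ⟨j.1, j.isLt⟩).val :=
        perm_val_ne π (show m-2 < m+1 by omega) j.isLt (by omega)
      unfold Bad at hb
      omega

lemma shrink1_avoid (π : Equiv.Perm (Fin (m+1)))
    (hπ : π ⟨m, by omega⟩ = ⟨0, by omega⟩)
    (hav : AvoidsAll [p123, p132, p321] π) :
    AvoidsAll [p123, p132, p321] (shrink1 π hπ) := by
  rw [avoid_iff] at hav ⊢
  intro i h
  have hb := hav i (by omega)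
  have e0 := shrink1_apply π hπ ⟨i, by omega⟩
  have e1 := shrink1_apply π hπ ⟨i+1, by omega⟩
  have e2 := shrink1_apply π hπ ⟨i+2, by omega⟩
  simp only [Fin.val_mk] at e0 e1 e2
  have p0 := pos_of_trailing_zero π hπ (show i < m by omega)
  have p1 := pos_of_trailing_zero π hπ (show i+1 < m by omega)
  have p2 := pos_of_trailing_zero π hπ (show i+2 < m by omega)
  unfold Bad at hb ⊢
  omega

lemma grow1_avoid (hm : 2 ≤ m) (σ : Equiv.Perm (Fin m))
    (h0 : σ ⟨m-2, (by omega : m - 2 < m + 0)⟩ = ⟨0, (by omega : 0 < m + 0)⟩)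
    (hav : AvoidsAll [p123, p132, p321] σ) :
    AvoidsAll [p123, p132, p321] (grow1 σ) := by
  rw [avoid_iff] at hav ⊢
  intro i h
  rcases Nat.lt_or_ge (i + 3) (m+1) with hA | hB
  · have hb := hav i (by omega)
    have e0 := grow1_apply_lt σ (show i < m+1 by omega) (by omega)
    have e1 := grow1_apply_lt σ (show i+1 < m+1 by omega) (by omega)
    have e2 := grow1_apply_lt σ (show i+2 < m+1 by omega) (by omega)
    unfold Bad at hb ⊢
    omega
  · have hi : i = m-2 := by omega
    subst hi
    have e0 := grow1_apply_lt σ (show m-2 < m+1 by omega) (by omega)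
    have e1 := grow1_apply_lt σ (show m-2+1 < m+1 by omega) (by omega)
    have e2 : ((grow1 σ) ⟨m-2+2, by omega⟩).val = 0 := by
      have e : (⟨m-2+2, by omega⟩ : Fin (m+1)) = ⟨m, by omega⟩ := Fin.ext (by simp; omega)
      rw [e, grow1_apply_last]
    have h0v : (σ ⟨m-2, by omega⟩).val = 0 := by rw [h0]
    unfold Bad
    omega
end T1

section C2
variable {m : ℕ}

/-- Remove the last entry of `π` and standardize the remaining values. -/
noncomputable def shrink2 (π : Equiv.Perm (Fin (m+1))) : Equiv.Perm (Fin m) :=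
  Equiv.ofBijective
    (fun i => ⟨if (π ⟨i.1, by omega⟩).val < (π ⟨m, by omega⟩).val
        then (π ⟨i.1, by omega⟩).val else (π ⟨i.1, by omega⟩).val - 1, by
      have ha := (π ⟨i.1, by omega⟩).isLt
      have hv := (π ⟨m, by omega⟩).isLt
      have hne := perm_val_ne π (show i.1 < m+1 by omega) (show m < m+1 by omega)
        (by have := i.isLt; omega)
      have him := i.isLt
      split_ifs with h <;> omega⟩)
    (by
      rw [← Finite.injective_iff_bijective]
      intro a b hab
      rw [Fin.mk.injEq] at hab
      have hnea := perm_val_ne π (show a.1 < m+1 by omega) (show m < m+1 by omega)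
        (by have := a.isLt; omega)
      have hneb := perm_val_ne π (show b.1 < m+1 by omega) (show m < m+1 by omega)
        (by have := b.isLt; omega)
      have : (π ⟨a.1, by omega⟩).val = (π ⟨b.1, by omega⟩).val := by
        split_ifs at hab <;> omega
      have := π.injective (Fin.ext this)
      rw [Fin.mk.injEq] at this
      exact Fin.ext this)

lemma shrink2_apply (π : Equiv.Perm (Fin (m+1))) (i : Fin m) :
    ((shrink2 π) i).val = if (π ⟨i.1, by omega⟩).val < (π ⟨m, by omega⟩).val
      then (π ⟨i.1, by omega⟩).val else (π ⟨i.1, by omega⟩).val - 1 := rfl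

/-- Insert the value `w+1` at the end (shifting old values `≥ w+1` up by 1). -/
noncomputable def grow2 (σ : Equiv.Perm (Fin m)) (w : Fin m) : Equiv.Perm (Fin (m+1)) :=
  Equiv.ofBijective
    (fun i => if h : i.1 < m then
        (if (σ ⟨i.1, h⟩).val < w.1 + 1
          then ⟨(σ ⟨i.1, h⟩).val, by have := (σ ⟨i.1, h⟩).isLt; omega⟩
          else ⟨(σ ⟨i.1, h⟩).val + 1, by have := (σ ⟨i.1, h⟩).isLt; omega⟩)
      else ⟨w.1 + 1, by have := w.isLt; omega⟩)
    (by
      rw [← Finite.injective_iff_bijective]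
      intro a b hab
      by_cases ha : a.1 < m <;> by_cases hb : b.1 < m <;>
        simp only [ha, hb, dif_pos, dif_neg, not_false_iff] at hab
      · have hw := w.isLt
        have : (σ ⟨a.1, ha⟩).val = (σ ⟨b.1, hb⟩).val := by
          split_ifs at hab <;> rw [Fin.mk.injEq] at hab <;> omega
        have := σ.injective (Fin.ext this)
        rw [Fin.mk.injEq] at this
        exact Fin.ext this
      · split_ifs at hab <;> rw [Fin.mk.injEq] at hab <;> omega
      · split_ifs at hab <;> rw [Fin.mk.injEq] at hab <;> omega
      · apply Fin.ext; have := a.isLt; have := b.isLt; omega)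

lemma grow2_apply_lt (σ : Equiv.Perm (Fin m)) (w : Fin m) {i : ℕ} (hi : i < m+1)
    (h : i < m) : ((grow2 σ w) ⟨i, hi⟩).val =
      if (σ ⟨i, h⟩).val < w.1 + 1 then (σ ⟨i, h⟩).val else (σ ⟨i, h⟩).val + 1 := by
  show (if h' : i < m then _ else _ : Fin (m+1)).val = _
  rw [dif_pos h, apply_ite Fin.val]

lemma grow2_apply_last (σ : Equiv.Perm (Fin m)) (w : Fin m) :
    (grow2 σ w) ⟨m, by omega⟩ = ⟨w.1 + 1, by have := w.isLt; omega⟩ := by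
  show (if h' : m < m then _ else _ : Fin (m+1)) = _
  rw [dif_neg (by omega)]

attribute [irreducible] shrink2 grow2

lemma grow2_shrink2 (π : Equiv.Perm (Fin (m+1))) (w : Fin m)
    (hw : w.1 + 1 = (π ⟨m, by omega⟩).val) : grow2 (shrink2 π) w = π := by
  apply Equiv.ext
  intro i
  apply Fin.ext
  by_cases h : i.1 < m
  · have e : i = ⟨i.1, by omega⟩ := Fin.ext rfl
    rw [e, grow2_apply_lt _ _ _ h]
    have e2 := shrink2_apply π ⟨i.1, h⟩
    simp only [Fin.val_mk] at e2 ⊢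
    have hne := perm_val_ne π (show i.1 < m+1 by omega) (show m < m+1 by omega) (by omega)
    rw [e2]
    split_ifs <;> omega
  · have e : i = ⟨m, by omega⟩ := Fin.ext (by simp only [Fin.val_mk]; have := i.isLt; omega)
    rw [e, grow2_apply_last]
    simp only [Fin.val_mk]
    omega

lemma shrink2_grow2 (σ : Equiv.Perm (Fin m)) (w : Fin m) :
    shrink2 (grow2 σ w) = σ := by
  apply Equiv.ext
  intro i
  apply Fin.ext
  have e0 := shrink2_apply (grow2 σ w) i
  have e1 := grow2_apply_lt σ w (show i.1 < m+1 by omega) i.isLt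
  have e2 := grow2_apply_last σ w
  have e2v : ((grow2 σ w) ⟨m, by omega⟩).val = w.1 + 1 := by rw [e2]
  simp only [Fin.val_mk, Fin.eta] at e0 e1 ⊢
  rw [e0, e1]
  have hσ := (σ i).isLt
  split_ifs <;> omega
end C2

lemma std_spec (a v : ℕ) (h : a ≠ v) :
    (a < v ∧ (if a < v then a else a - 1) = a) ∨
      (v < a ∧ (if a < v then a else a - 1) + 1 = a) := by
  split_ifs <;> omega

lemma unstd_spec (u w : ℕ) :
    (u < w + 1 ∧ (if u < w + 1 then u else u + 1) = u) ∨
      (w + 1 ≤ u ∧ (if u < w + 1 then u else u + 1) = u + 1) := by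
  split_ifs <;> omega

section T2
variable {m : ℕ}

lemma shrink2_avoid (π : Equiv.Perm (Fin (m+1)))
    (hav : AvoidsAll [p123, p132, p321] π) :
    AvoidsAll [p123, p132, p321] (shrink2 π) := by
  rw [avoid_iff] at hav ⊢
  intro i h
  have hb := hav i (by omega)
  have hm0 : m < m+1 := by omega
  have q0 : i < m+1 := by omega
  have q1 : i+1 < m+1 := by omega
  have q2 : i+2 < m+1 := by omega
  have e0 : ((shrink2 π) ⟨i, by omega⟩).val =
      if (π ⟨i, q0⟩).val < (π ⟨m, hm0⟩).val
        then (π ⟨i, q0⟩).val else (π ⟨i, q0⟩).val - 1 :=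
    shrink2_apply π ⟨i, by omega⟩
  have e1 : ((shrink2 π) ⟨i+1, by omega⟩).val =
      if (π ⟨i+1, q1⟩).val < (π ⟨m, hm0⟩).val
        then (π ⟨i+1, q1⟩).val else (π ⟨i+1, q1⟩).val - 1 :=
    shrink2_apply π ⟨i+1, by omega⟩
  have e2 : ((shrink2 π) ⟨i+2, by omega⟩).val =
      if (π ⟨i+2, q2⟩).val < (π ⟨m, hm0⟩).val
        then (π ⟨i+2, q2⟩).val else (π ⟨i+2, q2⟩).val - 1 :=
    shrink2_apply π ⟨i+2, by omega⟩
  have hne0 : (π ⟨i, q0⟩).val ≠ (π ⟨m, hm0⟩).val := perm_val_ne π q0 hm0 (by omega)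
  have hne1 : (π ⟨i+1, q1⟩).val ≠ (π ⟨m, hm0⟩).val := perm_val_ne π q1 hm0 (by omega)
  have hne2 : (π ⟨i+2, q2⟩).val ≠ (π ⟨m, hm0⟩).val := perm_val_ne π q2 hm0 (by omega)
  have s0 := std_spec _ _ hne0
  have s1 := std_spec _ _ hne1
  have s2 := std_spec _ _ hne2
  unfold Bad at hb ⊢
  rcases s0 with ⟨c0, f0⟩ | ⟨c0, f0⟩ <;> rcases s1 with ⟨c1, f1⟩ | ⟨c1, f1⟩ <;>
    rcases s2 with ⟨c2, f2⟩ | ⟨c2, f2⟩ <;> omega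

lemma grow2_avoid (hm : 1 ≤ m) (σ : Equiv.Perm (Fin m)) (w : Fin m)
    (h0 : σ ⟨m-1, by omega⟩ = ⟨0, by omega⟩)
    (hav : AvoidsAll [p123, p132, p321] σ) :
    AvoidsAll [p123, p132, p321] (grow2 σ w) := by
  rw [avoid_iff] at hav ⊢
  intro i h
  rcases Nat.lt_or_ge (i + 3) (m+1) with hA | hB
  · have hb := hav i (by omega)
    have q0 : i < m := by omega
    have q1 : i+1 < m := by omega
    have q2 : i+2 < m := by omega
    have e0 : ((grow2 σ w) ⟨i, by omega⟩).val =
        if (σ ⟨i, q0⟩).val < w.1 + 1 then (σ ⟨i, q0⟩).val else (σ ⟨i, q0⟩).val + 1 :=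
      grow2_apply_lt σ w (by omega) q0
    have e1 : ((grow2 σ w) ⟨i+1, by omega⟩).val =
        if (σ ⟨i+1, q1⟩).val < w.1 + 1 then (σ ⟨i+1, q1⟩).val else (σ ⟨i+1, q1⟩).val + 1 :=
      grow2_apply_lt σ w (by omega) q1
    have e2 : ((grow2 σ w) ⟨i+2, by omega⟩).val =
        if (σ ⟨i+2, q2⟩).val < w.1 + 1 then (σ ⟨i+2, q2⟩).val else (σ ⟨i+2, q2⟩).val + 1 :=
      grow2_apply_lt σ w (by omega) q2
    have s0 := unstd_spec (σ ⟨i, q0⟩).val w.1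
    have s1 := unstd_spec (σ ⟨i+1, q1⟩).val w.1
    have s2 := unstd_spec (σ ⟨i+2, q2⟩).val w.1
    unfold Bad at hb ⊢
    rcases s0 with ⟨c0, f0⟩ | ⟨c0, f0⟩ <;> rcases s1 with ⟨c1, f1⟩ | ⟨c1, f1⟩ <;>
      rcases s2 with ⟨c2, f2⟩ | ⟨c2, f2⟩ <;> omega
  · have hm2 : 2 ≤ m := by omega
    have hi : i = m-2 := by omega
    subst hi
    have q1 : m-2+1 < m := by omega
    have e1 : ((grow2 σ w) ⟨m-2+1, by omega⟩).val =
        if (σ ⟨m-2+1, q1⟩).val < w.1 + 1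
          then (σ ⟨m-2+1, q1⟩).val else (σ ⟨m-2+1, q1⟩).val + 1 :=
      grow2_apply_lt σ w (by omega) q1
    have epos : (⟨m-2+1, q1⟩ : Fin m) = ⟨m-1, by omega⟩ := Fin.ext (by simp; omega)
    rw [epos] at e1
    have h0v : (σ ⟨m-1, by omega⟩).val = 0 := by rw [h0]
    have ey : ((grow2 σ w) ⟨m-2+1, by omega⟩).val = 0 := by
      rw [e1]; rw [if_pos (by omega)]; exact h0v
    unfold Bad
    omega
end T2

section STEPS
variable {m : ℕ}

noncomputable def equiv1 (hm : 2 ≤ m) :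
    {π : Equiv.Perm (Fin (m+1)) // AvoidsAll [p123, p132, p321] π ∧
        π ⟨m, by omega⟩ = ⟨0, by omega⟩} ≃
    {σ : Equiv.Perm (Fin m) // AvoidsAll [p123, p132, p321] σ ∧
        σ ⟨m-2, (by omega : m - 2 < m + 0)⟩ = ⟨0, (by omega : 0 < m + 0)⟩} where
  toFun π := ⟨shrink1 π.1 π.2.2, shrink1_avoid π.1 π.2.2 π.2.1, by
    apply Fin.ext
    rw [shrink1_apply]
    have h1 := val_one_at hm π.1 π.2.1 π.2.2
    have h1v : (π.1 ⟨m-2, by omega⟩).val = 1 := by rw [h1]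
    simp only [Fin.val_mk] at h1v ⊢
    omega⟩
  invFun σ := ⟨grow1 σ.1, grow1_avoid hm σ.1 σ.2.2 σ.2.1, grow1_apply_last σ.1⟩
  left_inv π := Subtype.ext (grow1_shrink1 π.1 π.2.2)
  right_inv σ := Subtype.ext (shrink1_grow1 σ.1)

noncomputable def equiv2 (hm : 1 ≤ m) :
    {π : Equiv.Perm (Fin (m+1)) // AvoidsAll [p123, p132, p321] π ∧
        π ⟨m-1, by omega⟩ = ⟨0, by omega⟩} ≃
    (Fin m) × {σ : Equiv.Perm (Fin m) // AvoidsAll [p123, p132, p321] σ ∧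
        σ ⟨m-1, by omega⟩ = ⟨0, by omega⟩} where
  toFun π := by
    refine ⟨⟨(π.1 ⟨m, by omega⟩).val - 1, ?_⟩, ⟨shrink2 π.1, shrink2_avoid π.1 π.2.1, ?_⟩⟩
    · have hlt := (π.1 ⟨m, by omega⟩).isLt
      have h0v : (π.1 ⟨m-1, by omega⟩).val = 0 := by rw [π.2.2]
      have := perm_val_ne π.1 (show m < m+1 by omega) (show m-1 < m+1 by omega) (by omega)
      omega
    · apply Fin.ext
      have e := shrink2_apply π.1 ⟨m-1, by omega⟩
      simp only [Fin.val_mk] at e ⊢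
      rw [e]
      have h0v : (π.1 ⟨m-1, by omega⟩).val = 0 := by rw [π.2.2]
      have hne := perm_val_ne π.1 (show m-1 < m+1 by omega) (show m < m+1 by omega) (by omega)
      rw [if_pos (by omega)]
      omega
  invFun p := ⟨grow2 p.2.1 p.1, grow2_avoid hm p.2.1 p.1 p.2.2.2 p.2.2.1, by
    have q : m-1 < m := by omega
    have e := grow2_apply_lt p.2.1 p.1 (show m-1 < m+1 by omega) q
    apply Fin.ext
    simp only [Fin.val_mk] at e ⊢
    rw [e]
    have h0v : (p.2.1 ⟨m-1, q⟩).val = 0 := by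
      have := p.2.2.2
      have : (p.2.1 ⟨m-1, by omega⟩).val = 0 := by rw [this]
      simpa using this
    rw [if_pos (by omega)]
    omega⟩
  left_inv π := by
    apply Subtype.ext
    apply grow2_shrink2
    have hlt := (π.1 ⟨m, by omega⟩).isLt
    have h0v : (π.1 ⟨m-1, by omega⟩).val = 0 := by rw [π.2.2]
    have := perm_val_ne π.1 (show m < m+1 by omega) (show m-1 < m+1 by omega) (by omega)
    simp only [Fin.val_mk]
    omega
  right_inv p := by
    apply Prod.ext
    · apply Fin.ext
      have e := grow2_apply_last p.2.1 p.1
      have ev : ((grow2 p.2.1 p.1) ⟨m, by omega⟩).val = p.1.val + 1 := by rw [e]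
      simp only [Fin.val_mk]
      omega
    · exact Subtype.ext (shrink2_grow2 p.2.1 p.1)

lemma step1 (hm : 2 ≤ m) :
    classCard (m+1) (fun π => AvoidsAll [p123, p132, p321] π ∧
        π ⟨m, by omega⟩ = ⟨0, by omega⟩)
      = classCard m (fun σ => AvoidsAll [p123, p132, p321] σ ∧
        σ ⟨m-2, (by omega : m - 2 < m + 0)⟩ = ⟨0, (by omega : 0 < m + 0)⟩) :=
  Nat.card_congr (equiv1 hm)

lemma step2 (hm : 1 ≤ m) :
    classCard (m+1) (fun π => AvoidsAll [p123, p132, p321] π ∧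
        π ⟨m-1, by omega⟩ = ⟨0, by omega⟩)
      = m * classCard m (fun σ => AvoidsAll [p123, p132, p321] σ ∧
        σ ⟨m-1, by omega⟩ = ⟨0, by omega⟩) := by
  have := Nat.card_congr (equiv2 hm)
  rw [Nat.card_prod] at this
  have hf : Nat.card (Fin m) = m := by simp
  rw [hf] at this
  exact this
end STEPS

lemma avoid_two (π : Equiv.Perm (Fin 2)) : AvoidsAll [p123, p132, p321] π := by
  intro p hp i hocc
  obtain ⟨h, -⟩ := hocc
  omega

lemma perm_two_eq (π ρ : Equiv.Perm (Fin 2)) (a : Fin 2) (h : π a = ρ a) : π = ρ := by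
  apply Equiv.ext
  intro i
  by_cases hi : i = a
  · subst hi; exact h
  · have h1 : π i ≠ π a := fun he => hi (π.injective he)
    have h2 : ρ i ≠ ρ a := fun he => hi (ρ.injective he)
    apply Fin.ext
    have v1 := (π i).isLt
    have v2 := (ρ i).isLt
    have v3 := (π a).isLt
    have hv : (π a).val = (ρ a).val := by rw [h]
    have n1 : (π i).val ≠ (π a).val := fun he => h1 (Fin.ext he)
    have n2 : (ρ i).val ≠ (ρ a).val := fun he => h2 (Fin.ext he)
    omega

lemma card_two (a b : Fin 2) :
    classCard 2 (fun π => AvoidsAll [p123, p132, p321] π ∧ π a = b) = 1 := by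
  rw [classCard, Nat.card_eq_one_iff_unique]
  refine ⟨⟨?_⟩, ⟨⟨Equiv.swap a b, avoid_two _, Equiv.swap_apply_left a b⟩⟩⟩
  rintro ⟨π, -, hπ⟩ ⟨ρ, -, hρ⟩
  exact Subtype.ext (perm_two_eq π ρ a (hπ.trans hρ.symm))

theorem stmt3 (n : ℕ) (hn : 2 ≤ n) :
    classCard n (fun π => AvoidsAll [p123, p132, p321] π
        ∧ π ⟨n - 1, by omega⟩ = ⟨0, by omega⟩)
      = Nat.doubleFactorial (n - 2)
    ∧ classCard n (fun π => AvoidsAll [p123, p132, p321] π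
        ∧ π ⟨n - 2, by omega⟩ = ⟨0, by omega⟩)
      = Nat.doubleFactorial (n - 1) := by
  induction n, hn using Nat.le_induction with
  | base =>
    constructor
    · rw [show (fun π => AvoidsAll [p123, p132, p321] π
          ∧ π ⟨2 - 1, by omega⟩ = (⟨0, by omega⟩ : Fin 2)) = (fun π => AvoidsAll [p123, p132, p321] π
          ∧ π ⟨2 - 1, by omega⟩ = ⟨0, by omega⟩) from rfl, card_two]
      rfl
    · rw [card_two]
      rfl
  | succ n hn IH =>
    obtain ⟨IH1, IH2⟩ := IH
    constructor
    · have h := step1 (m := n) hn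
      have e : Nat.doubleFactorial (n - 1) = Nat.doubleFactorial (n + 1 - 2) := rfl
      exact h.trans (IH2.trans e)
    · have h := step2 (m := n) (by omega)
      refine h.trans ?_
      rw [IH1]
      obtain ⟨k, rfl⟩ : ∃ k, n = k + 2 := ⟨n - 2, by omega⟩
      show (k + 2) * Nat.doubleFactorial k = _
      rw [show k + 2 + 1 - 1 = k + 2 from rfl, Nat.doubleFactorial_add_two]
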